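/- Let a_1, …, a_n be distinct elements of a field and k ∈ ℕ with k ≥ n. The remainder of x^k upon division by g(x) = ∏_{i=1}^n (x − a_i) equals ∑_{l=1}^{n} S_{(k−l+1, 0^{n−l})}(a_1,…,a_n) · x^{l−1}, where S_{(k−l+1,0^{n−l})}(A) denotes the bialternant Schur polynomial with index vector having k−l+1 in position l (i.e., the ratio det(a_t^{c_s + s − 1})/det(a_t^{s−1}) where c = (0,…,0,k−l+1,0,…,0) with the nonzero entry in position l). -/

import Mathlib

open Polynomial Finset
open Matrix

/-- The remainder of `x^k` modulo `∏ (x − aᵢ)` is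
`∑_{l=1}^{n} S_{(0^{l−1}, k−l+1, 0^{n−l})}(A) · x^{l−1}`. -/
theorem remainder_power_eq_schur_sum {K : Type*} [Field K] {n : ℕ}
    (a : Fin n → K) (ha : Function.Injective a)
    (k : ℕ) (hk : n ≤ k) (g : K[X]) (hg : g = ∏ i, (X - C (a i))) :
    (X ^ k) %ₘ g =
      ∑ l : Fin n,
        C ((Matrix.of fun s t : Fin n =>
              a t ^ (if s = l then k else (s : ℕ))).det /
            (Matrix.of fun s t : Fin n => a t ^ (s : ℕ)).det) * X ^ (l : ℕ) := by
  set V : Matrix (Fin n) (Fin n) K := Matrix.of fun s t : Fin n => a t ^ (s : ℕ) with hV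
  have hVt : V = (Matrix.vandermonde a)ᵀ := by
    ext s t; simp [hV, Matrix.vandermonde]
  have hdV : V.det ≠ 0 := by
    rw [hVt, Matrix.det_transpose]
    exact (Matrix.det_vandermonde_ne_zero_iff).mpr ha
  have hmonic : g.Monic := by
    rw [hg]; exact monic_prod_of_monic _ _ fun i _ => monic_X_sub_C _
  have hdeg : g.degree = n := by
    rw [hg, degree_prod]
    simp [degree_X_sub_C]
  have hcard : ((#(Finset.univ : Finset (Fin n)) : ℕ) : WithBot ℕ) = (n : WithBot ℕ) := by simp
  apply Polynomial.eq_of_degrees_lt_of_eval_index_eq (v := a) Finset.univ ha.injOn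
  · rw [hcard, ← hdeg]
    exact degree_modByMonic_lt _ hmonic
  · rw [hcard]
    refine lt_of_le_of_lt (degree_sum_le _ _) ?_
    rw [Finset.sup_lt_iff (by exact_mod_cast bot_lt_iff_ne_bot.mpr (by simp))]
    intro l _
    exact lt_of_le_of_lt (degree_C_mul_X_pow_le _ _) (by exact_mod_cast l.2)
  · intro t _
    have hroot : g.eval (a t) = 0 := by
      rw [hg, eval_prod]
      exact Finset.prod_eq_zero (mem_univ t) (by simp)
    have h1 : ((X ^ k : K[X]) %ₘ g).eval (a t) = a t ^ k := by
      have := congrArg (eval (a t)) (modByMonic_add_div (X ^ k : K[X]) g)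
      simpa [hroot] using this
    rw [h1]
    -- Cramer's rule
    have hcr := congrFun (Matrix.mulVec_cramer Vᵀ (fun t => a t ^ k)) t
    have hMl : ∀ l : Fin n, Matrix.cramer Vᵀ (fun t => a t ^ k) l =
        (Matrix.of fun s t : Fin n => a t ^ (if s = l then k else (s : ℕ))).det := by
      intro l
      rw [Matrix.cramer_transpose_apply]
      congr 1
      ext s u
      by_cases h : s = l <;> simp [Matrix.updateRow_apply, h, hV]
    have hsum : ∑ l : Fin n, a t ^ (l : ℕ) *
        (Matrix.of fun s t : Fin n => a t ^ (if s = l then k else (s : ℕ))).det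
        = V.det * a t ^ k := by
      have h2 := hcr
      simp only [Matrix.mulVec, dotProduct, Matrix.transpose_apply,
        Matrix.det_transpose, Pi.smul_apply, smul_eq_mul, hMl] at h2
      simpa [hV] using h2
    rw [eval_finset_sum]
    simp only [eval_mul, eval_C, eval_pow, eval_X, div_mul_eq_mul_div, ← Finset.sum_div]
    rw [eq_div_iff hdV, mul_comm, ← hsum]
    exact Finset.sum_congr rfl fun l _ => mul_comm _ _
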